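/- With the notation of the optimal low-dimensional approximation in a Hilbert space: the vectors q_s = λ_s^{−1/2} Σ_k y_s(k) a_k, for s = 1,…,ℓ with λ_s ≠ 0 (and q_s = 0 if λ_s = 0), form a Parseval frame for the subspace S* = span{q_1,…,q_ℓ}. -/

import Mathlib

open InnerProductSpace Matrix

/-- with `G` the Gramian of `a_1,…,a_m`, eigenvalues `λ_1 ≥ ⋯ ≥ λ_m ≥ 0`
and orthonormal left-eigenvector system `y_1,…,y_m` (`∑_k ȳ_s(k) G_{kl} = λ_s ȳ_s(l)`,
i.e. `Gᴴ y_s = λ_s y_s`), the vectors `q_s = λ_s^{-1/2} ∑_k y_s(k) a_k` for `s = 1,…,ℓ`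
(with `q_s = 0` when `λ_s = 0`) form a Parseval frame for `S* = span{q_1,…,q_ℓ}`:
`∑_s |⟨f, q_s⟩|² = ‖f‖²` for every `f ∈ S*`. -/
theorem stmt7 {H : Type*} [NormedAddCommGroup H] [InnerProductSpace ℂ H] [CompleteSpace H]
    (m ℓ : ℕ) (hℓm : ℓ ≤ m)
    (a : Fin m → H)
    (G : Matrix (Fin m) (Fin m) ℂ) (hG : ∀ k l, G k l = ⟪a k, a l⟫_ℂ)
    (lam : Fin m → ℝ) (hdec : Antitone lam) (hnonneg : ∀ s, 0 ≤ lam s)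
    (y : Fin m → EuclideanSpace ℂ (Fin m)) (hy : Orthonormal ℂ y)
    (heig : ∀ s, G.conjTranspose *ᵥ (y s) = (lam s : ℂ) • (y s))
    (q : Fin ℓ → H)
    (hq : ∀ s : Fin ℓ, q s = if lam (Fin.castLE hℓm s) = 0 then 0
        else ((Real.sqrt (lam (Fin.castLE hℓm s)))⁻¹ : ℝ)
          • ∑ k, y (Fin.castLE hℓm s) k • a k) :
    ∀ f ∈ Submodule.span ℂ (Set.range q),
      ∑ s : Fin ℓ, ‖⟪f, q s⟫_ℂ‖ ^ 2 = ‖f‖ ^ 2 := by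
  have key : ∀ s t : Fin ℓ, ⟪q s, q t⟫_ℂ =
      if s = t ∧ lam (Fin.castLE hℓm s) ≠ 0 then 1 else 0 := by
    intro s t
    by_cases hs : lam (Fin.castLE hℓm s) = 0
    · rw [hq s, if_pos hs, inner_zero_left, if_neg]
      rintro ⟨rfl, h⟩; exact h hs
    by_cases ht : lam (Fin.castLE hℓm t) = 0
    · rw [hq t, if_pos ht, inner_zero_right, if_neg]
      rintro ⟨rfl, h⟩; exact h ht
    -- eigenvector relation, conjugated
    have h1 : ∀ l : Fin m, ∑ k, (starRingEnd ℂ) (y (Fin.castLE hℓm s) k) * G k l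
        = (lam (Fin.castLE hℓm s) : ℂ) * (starRingEnd ℂ) (y (Fin.castLE hℓm s) l) := by
      intro l
      have h2 := congrFun (heig (Fin.castLE hℓm s)) l
      simp only [Matrix.mulVec, dotProduct, Matrix.conjTranspose_apply,
        PiLp.smul_apply, smul_eq_mul] at h2
      have h3 := congrArg (starRingEnd ℂ) h2
      simpa [map_sum, mul_comm] using h3
    have hst : ⟪∑ k, y (Fin.castLE hℓm s) k • a k, ∑ l, y (Fin.castLE hℓm t) l • a l⟫_ℂ
        = (lam (Fin.castLE hℓm s) : ℂ) * (if s = t then 1 else 0) := by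
      rw [inner_sum]
      have : ∀ l : Fin m, ⟪∑ k, y (Fin.castLE hℓm s) k • a k,
          y (Fin.castLE hℓm t) l • a l⟫_ℂ
          = y (Fin.castLE hℓm t) l *
            ((lam (Fin.castLE hℓm s) : ℂ) * (starRingEnd ℂ) (y (Fin.castLE hℓm s) l)) := by
        intro l
        rw [inner_smul_right, sum_inner]
        simp_rw [inner_smul_left, ← hG]
        rw [h1 l]
      simp_rw [this]
      have hyy : ⟪y (Fin.castLE hℓm s), y (Fin.castLE hℓm t)⟫_ℂ
          = if s = t then 1 else 0 := by
        rw [orthonormal_iff_ite.mp hy]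
        simp [Fin.castLE_inj]
      rw [← hyy, PiLp.inner_apply]
      simp only [RCLike.inner_apply]
      rw [Finset.mul_sum]
      congr 1; ext l; ring
    rw [hq s, hq t, if_neg hs, if_neg ht,
      RCLike.real_smul_eq_coe_smul (K := ℂ), RCLike.real_smul_eq_coe_smul (K := ℂ),
      inner_smul_left, inner_smul_right, hst, RCLike.conj_ofReal]
    by_cases hst' : s = t
    · subst hst'
      rw [if_pos (show s = s ∧ lam (Fin.castLE hℓm s) ≠ 0 from ⟨rfl, hs⟩), if_pos rfl, mul_one]
      have h4 : Real.sqrt (lam (Fin.castLE hℓm s)) ≠ 0 :=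
        Real.sqrt_ne_zero'.mpr (lt_of_le_of_ne (hnonneg _) (Ne.symm hs))
      norm_cast
      field_simp
      have h5 : (1 / Real.sqrt (lam (Fin.castLE hℓm s))) ^ 2 * lam (Fin.castLE hℓm s) = 1 := by
        rw [div_pow, one_pow, Real.sq_sqrt (hnonneg _), one_div_mul_cancel hs]
      have h6 := congrArg (RCLike.ofReal (K := ℂ)) h5
      rw [RCLike.ofReal_mul, RCLike.ofReal_pow, RCLike.ofReal_one] at h6
      exact h6
    · simp [hst']
  intro f hf
  obtain ⟨c, rfl⟩ := (Submodule.mem_span_range_iff_exists_fun ℂ).mp hf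
  have hfq : ∀ t : Fin ℓ, ⟪∑ s, c s • q s, q t⟫_ℂ
      = if lam (Fin.castLE hℓm t) ≠ 0 then (starRingEnd ℂ) (c t) else 0 := by
    intro t
    rw [sum_inner]
    simp_rw [inner_smul_left, key]
    rw [Finset.sum_eq_single t]
    · by_cases ht : lam (Fin.castLE hℓm t) = 0 <;> simp [ht]
    · intro b _ hb
      rw [if_neg (fun h => hb h.1), mul_zero]
    · simp
  have hnorm := norm_sq_eq_re_inner (𝕜 := ℂ) (∑ s, c s • q s)
  rw [hnorm, inner_sum]
  simp_rw [inner_smul_right, hfq]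
  rw [map_sum]
  refine Finset.sum_congr rfl fun t _ => ?_
  by_cases ht : lam (Fin.castLE hℓm t) = 0
  · simp [ht]
  · simp only [ne_eq, ht, not_false_iff, if_true, Complex.mul_conj]
    simp [Complex.normSq_eq_norm_sq, sq_abs, ← Complex.ofReal_pow]
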